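/- Direct-effect identification (Pearl): in the model Y₄ = φ₄(ε₄), U = φ₅(ε₅), Y₃ = φ₃(Y₄,U,ε₃), Y₂ = φ₂(Y₃,Y₄,ε₂), Y₁ = φ₁(Y₂,Y₄,U,ε₁), with ε₁,...,ε₅ independent, the intervention probability p_t^{(y₂)}(y) := P(Ŷ₁ = y | Ŷ₄ = t), where Ŷ₁ = φ₁(y₂,Ŷ₄,Û,ε̂₁), Ŷ₃ = φ₃(Ŷ₄,Û,ε̂₃), Ŷ₄ = φ₄(ε̂₄), Û = φ₅(ε̂₅) with (Û,ε̂₁,ε̂₃,ε̂₄) distributed as (U,ε₁,ε₃,ε₄), satisfies p_t^{(y₂)}(y) = Σ_{y₃} P(Y₁=y | Y₂=y₂, Y₃=y₃, Y₄=t) P(Y₃=y₃ | Y₄=t). -/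

import Mathlib

open MeasureTheory ProbabilityTheory
open scoped ENNReal

private lemma ennreal_aux (x P R : ℝ≥0∞) (hx0 : x ≠ 0) (hxt : x ≠ ⊤) (hP0 : P ≠ 0)
    (hPt : P ≠ ⊤) : (x * P)⁻¹ * (x * R) * P = R := by
  rw [ENNReal.mul_inv (Or.inl hx0) (Or.inl hxt)]
  calc x⁻¹ * P⁻¹ * (x * R) * P = (x⁻¹ * x) * (P⁻¹ * P) * R := by ring
  _ = R := by rw [ENNReal.inv_mul_cancel hx0 hxt, ENNReal.inv_mul_cancel hP0 hPt, one_mul, one_mul]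

/-- Direct-effect identification (Pearl): in the model `Y₄ = φ₄(ε₄)`,
`U = φ₅(ε₅)`, `Y₃ = φ₃(Y₄,U,ε₃)`, `Y₂ = φ₂(Y₃,Y₄,ε₂)`, `Y₁ = φ₁(Y₂,Y₄,U,ε₁)`
with independent `ε₁,...,ε₅`, the intervention probability
`p_t^{(y₂)}(y) = P(Ŷ₁ = y | Ŷ₄ = t)` (second treatment fixed at `y₂`) equals
`Σ_{y₃} P(Y₁=y | Y₂=y₂, Y₃=y₃, Y₄=t) P(Y₃=y₃ | Y₄=t)`. -/
theorem direct_effect_identification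
    {Ω 𝒴₁ 𝒴₂ 𝒴₃ 𝒴₄ 𝒰 : Type*} [MeasurableSpace Ω]
    [MeasurableSpace 𝒴₁] [MeasurableSingletonClass 𝒴₁] [Countable 𝒴₁]
    [MeasurableSpace 𝒴₂] [MeasurableSingletonClass 𝒴₂] [Countable 𝒴₂]
    [MeasurableSpace 𝒴₃] [MeasurableSingletonClass 𝒴₃] [Countable 𝒴₃]
    [MeasurableSpace 𝒴₄] [MeasurableSingletonClass 𝒴₄] [Countable 𝒴₄]
    [MeasurableSpace 𝒰] [MeasurableSingletonClass 𝒰] [Countable 𝒰]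
    (μ : Measure Ω) [IsProbabilityMeasure μ]
    (ε : Fin 5 → Ω → ℝ) (hε : ∀ i, Measurable (ε i))
    (hindep : iIndepFun ε μ)
    (φ₁ : 𝒴₂ → 𝒴₄ → 𝒰 → ℝ → 𝒴₁) (φ₂ : 𝒴₃ → 𝒴₄ → ℝ → 𝒴₂)
    (φ₃ : 𝒴₄ → 𝒰 → ℝ → 𝒴₃) (φ₄ : ℝ → 𝒴₄) (φ₅ : ℝ → 𝒰)
    (hφ₁ : Measurable fun p : 𝒴₂ × 𝒴₄ × 𝒰 × ℝ => φ₁ p.1 p.2.1 p.2.2.1 p.2.2.2)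
    (hφ₂ : Measurable fun p : 𝒴₃ × 𝒴₄ × ℝ => φ₂ p.1 p.2.1 p.2.2)
    (hφ₃ : Measurable fun p : 𝒴₄ × 𝒰 × ℝ => φ₃ p.1 p.2.1 p.2.2)
    (hφ₄ : Measurable φ₄) (hφ₅ : Measurable φ₅)
    -- observational model
    (Y₄ : Ω → 𝒴₄) (hY₄ : ∀ ω, Y₄ ω = φ₄ (ε 3 ω))
    (Uv : Ω → 𝒰) (hUv : ∀ ω, Uv ω = φ₅ (ε 4 ω))
    (Y₃ : Ω → 𝒴₃) (hY₃ : ∀ ω, Y₃ ω = φ₃ (Y₄ ω) (Uv ω) (ε 2 ω))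
    (Y₂ : Ω → 𝒴₂) (hY₂ : ∀ ω, Y₂ ω = φ₂ (Y₃ ω) (Y₄ ω) (ε 1 ω))
    (Y₁ : Ω → 𝒴₁) (hY₁ : ∀ ω, Y₁ ω = φ₁ (Y₂ ω) (Y₄ ω) (Uv ω) (ε 0 ω))
    -- intervention model: second treatment fixed at y₂, fresh noise
    (y₂ : 𝒴₂) (εh₁ εh₃ εh₄ εh₅ : Ω → ℝ)
    (hεh : Measurable εh₁ ∧ Measurable εh₃ ∧ Measurable εh₄ ∧ Measurable εh₅)
    (hεhdist : μ.map (fun ω => (εh₁ ω, εh₃ ω, εh₄ ω, εh₅ ω))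
        = μ.map (fun ω => (ε 0 ω, ε 2 ω, ε 3 ω, ε 4 ω)))
    (Yh₄ : Ω → 𝒴₄) (hYh₄ : ∀ ω, Yh₄ ω = φ₄ (εh₄ ω))
    (Uh : Ω → 𝒰) (hUh : ∀ ω, Uh ω = φ₅ (εh₅ ω))
    (Yh₃ : Ω → 𝒴₃) (hYh₃ : ∀ ω, Yh₃ ω = φ₃ (Yh₄ ω) (Uh ω) (εh₃ ω))
    (Yh₁ : Ω → 𝒴₁) (hYh₁ : ∀ ω, Yh₁ ω = φ₁ y₂ (Yh₄ ω) (Uh ω) (εh₁ ω))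
    (t : 𝒴₄) (y : 𝒴₁)
    (hposY₄ : 0 < μ {ω | Y₄ ω = t}) (hposYh₄ : 0 < μ {ω | Yh₄ ω = t})
    (hpos : ∀ y₃ : 𝒴₃, 0 < μ {ω | Y₂ ω = y₂ ∧ Y₃ ω = y₃ ∧ Y₄ ω = t}) :
    μ[|{ω | Yh₄ ω = t}] {ω | Yh₁ ω = y}
      = ∑' y₃ : 𝒴₃,
          μ[|{ω | Y₂ ω = y₂ ∧ Y₃ ω = y₃ ∧ Y₄ ω = t}] {ω | Y₁ ω = y} *
          μ[|{ω | Y₄ ω = t}] {ω | Y₃ ω = y₃} := by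
  classical
  -- building-block measurable sets on ℝ
  set S3 : Set ℝ := φ₄ ⁻¹' {t} with hS3def
  have hS3m : MeasurableSet S3 := hφ₄ (measurableSet_singleton t)
  set Q : 𝒰 → Set ℝ := fun u => φ₅ ⁻¹' {u} with hQdef
  have hQm : ∀ u, MeasurableSet (Q u) := fun u => hφ₅ (measurableSet_singleton u)
  have hφ₃' : ∀ u, Measurable fun e : ℝ => φ₃ t u e := fun u =>
    hφ₃.comp (measurable_const.prodMk (measurable_const.prodMk measurable_id))
  set B : 𝒰 → 𝒴₃ → Set ℝ := fun u y₃ => (fun e => φ₃ t u e) ⁻¹' {y₃} with hBdef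
  have hBm : ∀ u y₃, MeasurableSet (B u y₃) := fun u y₃ => hφ₃' u (measurableSet_singleton y₃)
  have hφ₂' : ∀ y₃, Measurable fun e : ℝ => φ₂ y₃ t e := fun y₃ =>
    hφ₂.comp (measurable_const.prodMk (measurable_const.prodMk measurable_id))
  set C : 𝒴₃ → Set ℝ := fun y₃ => (fun e => φ₂ y₃ t e) ⁻¹' {y₂} with hCdef
  have hCm : ∀ y₃, MeasurableSet (C y₃) := fun y₃ => hφ₂' y₃ (measurableSet_singleton y₂)
  have hφ₁' : ∀ u, Measurable fun e : ℝ => φ₁ y₂ t u e := fun u =>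
    hφ₁.comp (measurable_const.prodMk (measurable_const.prodMk
      (measurable_const.prodMk measurable_id)))
  set D : 𝒰 → Set ℝ := fun u => (fun e => φ₁ y₂ t u e) ⁻¹' {y} with hDdef
  have hDm : ∀ u, MeasurableSet (D u) := fun u => hφ₁' u (measurableSet_singleton y)
  -- scalar values
  set a : ℝ≥0∞ := μ (ε 3 ⁻¹' S3) with ha
  set q : 𝒰 → ℝ≥0∞ := fun u => μ (ε 4 ⁻¹' Q u) with hq
  set b : 𝒰 → 𝒴₃ → ℝ≥0∞ := fun u y₃ => μ (ε 2 ⁻¹' B u y₃) with hb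
  set c : 𝒴₃ → ℝ≥0∞ := fun y₃ => μ (ε 1 ⁻¹' C y₃) with hc
  set d : 𝒰 → ℝ≥0∞ := fun u => μ (ε 0 ⁻¹' D u) with hd
  set P : 𝒴₃ → ℝ≥0∞ := fun y₃ => ∑' u, b u y₃ * q u with hP
  set R : 𝒴₃ → ℝ≥0∞ := fun y₃ => ∑' u, d u * b u y₃ * q u with hR
  -- five-fold independence product formula
  have key5 : ∀ (T0 T1 T2 T3 T4 : Set ℝ), MeasurableSet T0 → MeasurableSet T1 →
      MeasurableSet T2 → MeasurableSet T3 → MeasurableSet T4 →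
      μ (ε 0 ⁻¹' T0 ∩ ε 1 ⁻¹' T1 ∩ ε 2 ⁻¹' T2 ∩ ε 3 ⁻¹' T3 ∩ ε 4 ⁻¹' T4)
        = μ (ε 0 ⁻¹' T0) * μ (ε 1 ⁻¹' T1) * μ (ε 2 ⁻¹' T2) * μ (ε 3 ⁻¹' T3) * μ (ε 4 ⁻¹' T4) := by
    intro T0 T1 T2 T3 T4 h0 h1 h2 h3 h4
    have hh := hindep.measure_inter_preimage_eq_mul (sets := ![T0, T1, T2, T3, T4]) Finset.univ
      (fun i _ => by fin_cases i <;> simpa)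
    have hset : (⋂ i ∈ Finset.univ, ε i ⁻¹' (![T0, T1, T2, T3, T4] i))
        = ε 0 ⁻¹' T0 ∩ ε 1 ⁻¹' T1 ∩ ε 2 ⁻¹' T2 ∩ ε 3 ⁻¹' T3 ∩ ε 4 ⁻¹' T4 := by
      ext ω
      constructor
      · intro h
        have h' : ∀ i : Fin 5, ω ∈ ε i ⁻¹' (![T0, T1, T2, T3, T4] i) := fun i =>
          Set.mem_iInter₂.mp h i (Finset.mem_univ i)
        have m0 := h' 0; have m1 := h' 1; have m2 := h' 2; have m3 := h' 3; have m4 := h' 4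
        simp only [Set.mem_preimage] at m0 m1 m2 m3 m4
        simp at m0 m1 m2 m3 m4
        exact ⟨⟨⟨⟨m0, m1⟩, m2⟩, m3⟩, m4⟩
      · rintro ⟨⟨⟨⟨m0, m1⟩, m2⟩, m3⟩, m4⟩
        refine Set.mem_iInter₂.mpr fun i _ => ?_
        fin_cases i <;> simpa
    rw [hset] at hh
    rw [hh, Fin.prod_univ_five]
    simp
  -- b sums to one
  have hbsum : ∀ u, ∑' y₃, b u y₃ = 1 := by
    intro u
    have hdis : Pairwise (Function.onFun Disjoint fun y₃ => ε 2 ⁻¹' B u y₃) := by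
      intro y₃ y₃' hne
      refine Set.disjoint_left.mpr fun ω h1 h2 => hne ?_
      simp only [hBdef, Set.mem_preimage, Set.mem_singleton_iff] at h1 h2
      rw [← h1, ← h2]
    have hcover : (⋃ y₃, ε 2 ⁻¹' B u y₃) = Set.univ := by
      ext ω; simp [hBdef]
    calc ∑' y₃, b u y₃ = μ (⋃ y₃, ε 2 ⁻¹' B u y₃) :=
          (measure_iUnion hdis fun y₃ => (hε 2) (hBm u y₃)).symm
    _ = 1 := by rw [hcover, measure_univ]
  -- disjointness helper
  have hdisjQ : ∀ (A : 𝒰 → Set Ω), (∀ u, A u ⊆ ε 4 ⁻¹' Q u) →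
      Pairwise (Function.onFun Disjoint A) := by
    intro A hA u v huv
    refine Set.disjoint_left.mpr fun ω hu hv => huv ?_
    have h1 := hA u hu
    have h2 := hA v hv
    simp only [hQdef, Set.mem_preimage, Set.mem_singleton_iff] at h1 h2
    rw [← h1, ← h2]
  -- positivity of a
  have hsetY4 : {ω | Y₄ ω = t} = ε 3 ⁻¹' S3 := by
    ext ω; simp [hY₄, hS3def]
  have ha0 : a ≠ 0 := by
    rw [ha, ← hsetY4]; exact hposY₄.ne'
  have haT : a ≠ ⊤ := by rw [ha]; exact measure_ne_top μ _
  -- set identity: (Y₄ = t) ∩ (Y₃ = y₃)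
  have hset34 : ∀ y₃ : 𝒴₃, ε 3 ⁻¹' S3 ∩ {ω | Y₃ ω = y₃}
      = ⋃ u, (ε 0 ⁻¹' Set.univ ∩ ε 1 ⁻¹' Set.univ ∩ ε 2 ⁻¹' B u y₃ ∩ ε 3 ⁻¹' S3 ∩ ε 4 ⁻¹' Q u) := by
    intro y₃
    ext ω
    simp only [Set.mem_inter_iff, Set.mem_preimage, Set.mem_setOf_eq, Set.mem_iUnion,
      Set.preimage_univ, Set.mem_univ, true_and, Set.inter_univ, Set.univ_inter,
      hS3def, hQdef, hBdef, Set.mem_singleton_iff, hY₃, hY₄, hUv]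
    constructor
    · rintro ⟨h3, hy3⟩
      rw [h3] at hy3
      exact ⟨φ₅ (ε 4 ω), ⟨hy3, h3⟩, rfl⟩
    · rintro ⟨u, ⟨hb', h3⟩, hq'⟩
      refine ⟨h3, ?_⟩
      rw [h3, hq']
      exact hb'
  -- set identity: triple event
  have hset234 : ∀ y₃ : 𝒴₃, {ω | Y₂ ω = y₂ ∧ Y₃ ω = y₃ ∧ Y₄ ω = t}
      = ⋃ u, (ε 0 ⁻¹' Set.univ ∩ ε 1 ⁻¹' C y₃ ∩ ε 2 ⁻¹' B u y₃ ∩ ε 3 ⁻¹' S3 ∩ ε 4 ⁻¹' Q u) := by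
    intro y₃
    ext ω
    simp only [Set.mem_inter_iff, Set.mem_preimage, Set.mem_setOf_eq, Set.mem_iUnion,
      Set.preimage_univ, Set.mem_univ, true_and, Set.inter_univ, Set.univ_inter,
      hS3def, hQdef, hBdef, hCdef, Set.mem_singleton_iff, hY₂, hY₃, hY₄, hUv]
    constructor
    · rintro ⟨h2, h3, h4⟩
      rw [h4] at h2 h3
      rw [h3] at h2
      exact ⟨φ₅ (ε 4 ω), ⟨⟨h2, h3⟩, h4⟩, rfl⟩
    · rintro ⟨u, ⟨⟨h2, h3⟩, h4⟩, h5⟩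
      subst h5
      have h3' : φ₃ (φ₄ (ε 3 ω)) (φ₅ (ε 4 ω)) (ε 2 ω) = y₃ := by rw [h4]; exact h3
      refine ⟨?_, h3', h4⟩
      rw [h3', h4]
      exact h2
  -- set identity: quadruple event
  have hset1234 : ∀ y₃ : 𝒴₃, {ω | Y₂ ω = y₂ ∧ Y₃ ω = y₃ ∧ Y₄ ω = t} ∩ {ω | Y₁ ω = y}
      = ⋃ u, (ε 0 ⁻¹' D u ∩ ε 1 ⁻¹' C y₃ ∩ ε 2 ⁻¹' B u y₃ ∩ ε 3 ⁻¹' S3 ∩ ε 4 ⁻¹' Q u) := by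
    intro y₃
    ext ω
    simp only [Set.mem_inter_iff, Set.mem_preimage, Set.mem_setOf_eq, Set.mem_iUnion,
      hS3def, hQdef, hBdef, hCdef, hDdef, Set.mem_singleton_iff, hY₁, hY₂, hY₃, hY₄, hUv]
    constructor
    · rintro ⟨⟨h2, h3, h4⟩, h1⟩
      rw [h4] at h1 h2 h3
      rw [h3] at h1 h2
      rw [h2] at h1
      exact ⟨φ₅ (ε 4 ω), ⟨⟨⟨h1, h2⟩, h3⟩, h4⟩, rfl⟩
    · rintro ⟨u, ⟨⟨⟨h1, h2⟩, h3⟩, h4⟩, h5⟩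
      subst h5
      have h3' : φ₃ (φ₄ (ε 3 ω)) (φ₅ (ε 4 ω)) (ε 2 ω) = y₃ := by rw [h4]; exact h3
      have h2' : φ₂ (φ₃ (φ₄ (ε 3 ω)) (φ₅ (ε 4 ω)) (ε 2 ω)) (φ₄ (ε 3 ω)) (ε 1 ω) = y₂ := by
        rw [h3', h4]; exact h2
      refine ⟨⟨h2', h3', h4⟩, ?_⟩
      rw [h2', h4]
      exact h1
  -- measure computations
  have hμ34 : ∀ y₃ : 𝒴₃, μ (ε 3 ⁻¹' S3 ∩ {ω | Y₃ ω = y₃}) = a * P y₃ := by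
    intro y₃
    rw [hset34 y₃, measure_iUnion
      (hdisjQ _ fun u ω h => h.2)
      (fun u => (((((hε 0) MeasurableSet.univ).inter ((hε 1) MeasurableSet.univ)).inter
        ((hε 2) (hBm u y₃))).inter ((hε 3) hS3m)).inter ((hε 4) (hQm u)))]
    rw [hP, ← ENNReal.tsum_mul_left]
    refine tsum_congr fun u => ?_
    rw [key5 _ _ _ _ _ MeasurableSet.univ MeasurableSet.univ (hBm u y₃) hS3m (hQm u)]
    simp only [Set.preimage_univ, measure_univ, one_mul]
    simp only [ha, hb, hq]
    ring
  have hμT : ∀ y₃ : 𝒴₃, μ {ω | Y₂ ω = y₂ ∧ Y₃ ω = y₃ ∧ Y₄ ω = t} = (c y₃ * a) * P y₃ := by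
    intro y₃
    rw [hset234 y₃, measure_iUnion
      (hdisjQ _ fun u ω h => h.2)
      (fun u => (((((hε 0) MeasurableSet.univ).inter ((hε 1) (hCm y₃))).inter
        ((hε 2) (hBm u y₃))).inter ((hε 3) hS3m)).inter ((hε 4) (hQm u)))]
    rw [hP, ← ENNReal.tsum_mul_left]
    refine tsum_congr fun u => ?_
    rw [key5 _ _ _ _ _ MeasurableSet.univ (hCm y₃) (hBm u y₃) hS3m (hQm u)]
    simp only [Set.preimage_univ, measure_univ, one_mul]
    simp only [ha, hb, hq, hc]
    ring
  have hμ14 : ∀ y₃ : 𝒴₃, μ ({ω | Y₂ ω = y₂ ∧ Y₃ ω = y₃ ∧ Y₄ ω = t} ∩ {ω | Y₁ ω = y})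
      = (c y₃ * a) * R y₃ := by
    intro y₃
    rw [hset1234 y₃, measure_iUnion
      (hdisjQ _ fun u ω h => h.2)
      (fun u => (((((hε 0) (hDm u)).inter ((hε 1) (hCm y₃))).inter
        ((hε 2) (hBm u y₃))).inter ((hε 3) hS3m)).inter ((hε 4) (hQm u)))]
    rw [hR, ← ENNReal.tsum_mul_left]
    refine tsum_congr fun u => ?_
    rw [key5 _ _ _ _ _ (hDm u) (hCm y₃) (hBm u y₃) hS3m (hQm u)]
    simp only [ha, hb, hq, hc, hd]
    ring
  -- the intervention side
  have hVhm : Measurable fun ω => (εh₁ ω, εh₃ ω, εh₄ ω, εh₅ ω) :=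
    hεh.1.prodMk (hεh.2.1.prodMk (hεh.2.2.1.prodMk hεh.2.2.2))
  have hVm : Measurable fun ω => (ε 0 ω, ε 2 ω, ε 3 ω, ε 4 ω) :=
    (hε 0).prodMk ((hε 2).prodMk ((hε 3).prodMk (hε 4)))
  have htransfer : ∀ T : Set (ℝ × ℝ × ℝ × ℝ), MeasurableSet T →
      μ ((fun ω => (εh₁ ω, εh₃ ω, εh₄ ω, εh₅ ω)) ⁻¹' T)
        = μ ((fun ω => (ε 0 ω, ε 2 ω, ε 3 ω, ε 4 ω)) ⁻¹' T) := by
    intro T hT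
    rw [← Measure.map_apply hVhm hT, ← Measure.map_apply hVm hT, hεhdist]
  have hsetYh4 : {ω | Yh₄ ω = t} = εh₄ ⁻¹' S3 := by
    ext ω; simp [hYh₄, hS3def]
  have hμYh4 : μ (εh₄ ⁻¹' S3) = a := by
    have h1 : εh₄ ⁻¹' S3
        = (fun ω => (εh₁ ω, εh₃ ω, εh₄ ω, εh₅ ω)) ⁻¹' {p : ℝ × ℝ × ℝ × ℝ | p.2.2.1 ∈ S3} := by
      ext ω; simp
    have hTm : MeasurableSet {p : ℝ × ℝ × ℝ × ℝ | p.2.2.1 ∈ S3} :=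
      measurable_snd.snd.fst hS3m
    have h2 : (fun ω => (ε 0 ω, ε 2 ω, ε 3 ω, ε 4 ω)) ⁻¹'
        {p : ℝ × ℝ × ℝ × ℝ | p.2.2.1 ∈ S3} = ε 3 ⁻¹' S3 := by
      ext ω; simp
    rw [h1, htransfer _ hTm, h2, ha]
  have hμhat : μ (εh₄ ⁻¹' S3 ∩ {ω | Yh₁ ω = y}) = a * ∑' u, d u * q u := by
    have hm2 : Measurable fun p : ℝ × ℝ × ℝ × ℝ => φ₁ y₂ (φ₄ p.2.2.1) (φ₅ p.2.2.2) p.1 :=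
      hφ₁.comp (measurable_const.prodMk ((hφ₄.comp measurable_snd.snd.fst).prodMk
        ((hφ₅.comp measurable_snd.snd.snd).prodMk measurable_fst)))
    have hTm : MeasurableSet {p : ℝ × ℝ × ℝ × ℝ |
        p.2.2.1 ∈ S3 ∧ φ₁ y₂ (φ₄ p.2.2.1) (φ₅ p.2.2.2) p.1 = y} :=
      (measurable_snd.snd.fst hS3m).inter (hm2 (measurableSet_singleton y))
    have h1 : εh₄ ⁻¹' S3 ∩ {ω | Yh₁ ω = y}
        = (fun ω => (εh₁ ω, εh₃ ω, εh₄ ω, εh₅ ω)) ⁻¹' {p : ℝ × ℝ × ℝ × ℝ |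
            p.2.2.1 ∈ S3 ∧ φ₁ y₂ (φ₄ p.2.2.1) (φ₅ p.2.2.2) p.1 = y} := by
      ext ω
      simp [hYh₁, hYh₄, hUh]
    have h2 : (fun ω => (ε 0 ω, ε 2 ω, ε 3 ω, ε 4 ω)) ⁻¹' {p : ℝ × ℝ × ℝ × ℝ |
          p.2.2.1 ∈ S3 ∧ φ₁ y₂ (φ₄ p.2.2.1) (φ₅ p.2.2.2) p.1 = y}
        = ⋃ u, (ε 0 ⁻¹' D u ∩ ε 1 ⁻¹' Set.univ ∩ ε 2 ⁻¹' Set.univ ∩ ε 3 ⁻¹' S3 ∩ ε 4 ⁻¹' Q u) := by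
      ext ω
      simp only [Set.mem_preimage, Set.mem_setOf_eq, Set.mem_iUnion, Set.mem_inter_iff,
        Set.preimage_univ, Set.mem_univ, true_and, Set.inter_univ, Set.univ_inter,
        hS3def, hQdef, hDdef, Set.mem_singleton_iff]
      constructor
      · rintro ⟨h3, h1'⟩
        rw [h3] at h1'
        exact ⟨φ₅ (ε 4 ω), ⟨h1', h3⟩, rfl⟩
      · rintro ⟨u, ⟨h1', h3⟩, h5⟩
        subst h5
        refine ⟨h3, ?_⟩
        rw [h3]
        exact h1'
    rw [h1, htransfer _ hTm, h2, measure_iUnion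
      (hdisjQ _ fun u ω h => h.2)
      (fun u => (((((hε 0) (hDm u)).inter ((hε 1) MeasurableSet.univ)).inter
        ((hε 2) MeasurableSet.univ)).inter ((hε 3) hS3m)).inter ((hε 4) (hQm u)))]
    rw [← ENNReal.tsum_mul_left]
    refine tsum_congr fun u => ?_
    rw [key5 _ _ _ _ _ (hDm u) MeasurableSet.univ MeasurableSet.univ hS3m (hQm u)]
    simp only [Set.preimage_univ, measure_univ, mul_one, one_mul]
    simp only [ha, hq, hd]
    ring
  -- left-hand side
  have hLHS : μ[|{ω | Yh₄ ω = t}] {ω | Yh₁ ω = y} = ∑' u, d u * q u := by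
    rw [hsetYh4, cond_apply (hεh.2.2.1 hS3m) μ, hμYh4, hμhat, ← mul_assoc,
      ENNReal.inv_mul_cancel ha0 haT, one_mul]
  -- right-hand side, termwise
  have hterm : ∀ y₃ : 𝒴₃,
      μ[|{ω | Y₂ ω = y₂ ∧ Y₃ ω = y₃ ∧ Y₄ ω = t}] {ω | Y₁ ω = y} *
        μ[|{ω | Y₄ ω = t}] {ω | Y₃ ω = y₃} = R y₃ := by
    intro y₃
    have hmeasT : MeasurableSet {ω | Y₂ ω = y₂ ∧ Y₃ ω = y₃ ∧ Y₄ ω = t} := by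
      rw [hset234 y₃]
      exact MeasurableSet.iUnion fun u =>
        (((((hε 0) MeasurableSet.univ).inter ((hε 1) (hCm y₃))).inter
          ((hε 2) (hBm u y₃))).inter ((hε 3) hS3m)).inter ((hε 4) (hQm u))
    have hmeas4 : MeasurableSet {ω | Y₄ ω = t} := by
      rw [hsetY4]; exact (hε 3) hS3m
    have hX0 : (c y₃ * a) * P y₃ ≠ 0 := by rw [← hμT y₃]; exact (hpos y₃).ne'
    have hXT : (c y₃ * a) * P y₃ ≠ ⊤ := by rw [← hμT y₃]; exact measure_ne_top μ _
    have hx0 : c y₃ * a ≠ 0 := fun h => hX0 (by rw [h, zero_mul])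
    have hP0 : P y₃ ≠ 0 := fun h => hX0 (by rw [h, mul_zero])
    have hxT : c y₃ * a ≠ ⊤ := ENNReal.mul_ne_top (by rw [hc]; exact measure_ne_top μ _) haT
    have hPT : P y₃ ≠ ⊤ := fun h => hXT (by rw [h, ENNReal.mul_top hx0])
    rw [cond_apply hmeasT μ, cond_apply hmeas4 μ, hμT y₃, hμ14 y₃, hsetY4, ← ha, hμ34 y₃,
      ← mul_assoc a⁻¹, ENNReal.inv_mul_cancel ha0 haT, one_mul]
    exact ennreal_aux (c y₃ * a) (P y₃) (R y₃) hx0 hxT hP0 hPT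
  rw [hLHS, tsum_congr hterm]
  -- final summation identity
  have hper : ∀ u, (∑' y₃, d u * b u y₃ * q u) = d u * q u := by
    intro u
    calc ∑' y₃, d u * b u y₃ * q u = ∑' y₃, (d u * q u) * b u y₃ :=
          tsum_congr fun y₃ => by ring
    _ = (d u * q u) * ∑' y₃, b u y₃ := ENNReal.tsum_mul_left
    _ = d u * q u := by rw [hbsum u, mul_one]
  calc ∑' u, d u * q u = ∑' u, ∑' y₃, d u * b u y₃ * q u := tsum_congr fun u => (hper u).symm
  _ = ∑' y₃, ∑' u, d u * b u y₃ * q u := ENNReal.tsum_comm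
  _ = ∑' y₃, R y₃ := by rw [hR]
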